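/- Let c > 0. The function K_c(x,y) = −(c/2)·x·∑_{m=0}^∞ (c(x² − y²)/4)^m / (m!·(m+1)!) satisfies, for all (x,y) ∈ ℝ²: ∂²K_c/∂y²(x,y) − ∂²K_c/∂x²(x,y) + c·K_c(x,y) = 0; and for all x ∈ ℝ: ∂K_c/∂y(x,0) = 0 and K_c(x,x) = −(c/2)·x. (In particular, K_c solves the backstepping kernel equation k_yy − k_xx + c·k = 0 on 0 < y < x < 1 with k_y(x,0) = 0 and k(x,x) = −cx/2.) -/

import Mathlib

/-- The backstepping kernel
`K_c(x,y) = −(c/2)·x·∑_{m=0}^∞ (c(x²−y²)/4)^m / (m!·(m+1)!)`. -/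
noncomputable def Kker (c x y : ℝ) : ℝ :=
  -(c / 2) * x * ∑' m : ℕ, (c * (x ^ 2 - y ^ 2) / 4) ^ m /
    ((Nat.factorial m : ℝ) * (Nat.factorial (m + 1) : ℝ))

/-- Partial derivative in the first variable. -/
noncomputable def pdx (f : ℝ → ℝ → ℝ) (x y : ℝ) : ℝ := deriv (fun x' => f x' y) x

/-- Partial derivative in the second variable. -/
noncomputable def pdy (f : ℝ → ℝ → ℝ) (x y : ℝ) : ℝ := deriv (fun y' => f x y') y

open scoped Nat

namespace KkerAux


/-- generic summability for factorially-decaying coefficients -/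
lemma summable_series (a : ℕ → ℝ) (ha : ∀ n, |a n| ≤ 1 / n !) (t : ℝ) :
    Summable (fun n => a n * t ^ n) := by
  apply Summable.of_norm_bounded (Real.summable_pow_div_factorial |t|)
  intro n
  rw [norm_mul, norm_pow, Real.norm_eq_abs, Real.norm_eq_abs]
  have h1 : (0:ℝ) < n ! := by positivity
  calc |a n| * |t| ^ n ≤ (1 / n !) * |t| ^ n := by
        apply mul_le_mul_of_nonneg_right (ha n) (by positivity)
    _ = |t| ^ n / n ! := by ring

lemma hasDerivAt_series (a : ℕ → ℝ) (ha : ∀ n, |a n| ≤ 1 / n !) (u : ℝ) :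
    HasDerivAt (fun x : ℝ => ∑' n : ℕ, a n * x ^ n)
      (∑' n : ℕ, ((n : ℝ) + 1) * a (n + 1) * u ^ n) u := by
  set R : ℝ := |u| + 1 with hR
  have hR1 : (1:ℝ) ≤ R := by simpa [hR] using abs_nonneg u
  have hR0 : (0:ℝ) < R := by linarith
  have hbound : ∀ n : ℕ, ∀ y : ℝ, y ∈ Metric.ball (0:ℝ) R →
      ‖a n * ((n : ℝ) * y ^ (n - 1))‖ ≤ (2 * R) ^ n / n ! := by
    intro n y hy
    have hyR : |y| ≤ R := le_of_lt (by simpa [Real.norm_eq_abs] using hy)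
    have h1 : (0:ℝ) < n ! := by positivity
    rw [norm_mul, norm_mul, Real.norm_eq_abs, Real.norm_eq_abs, Real.norm_eq_abs, abs_pow]
    have hn2 : (n : ℝ) ≤ 2 ^ n := by
      exact_mod_cast (Nat.lt_two_pow_self (n := n)).le
    have hyn : |y| ^ (n - 1) ≤ R ^ n := by
      calc |y| ^ (n - 1) ≤ R ^ (n - 1) :=
            pow_le_pow_left₀ (abs_nonneg y) hyR _
        _ ≤ R ^ n := pow_le_pow_right₀ hR1 (Nat.sub_le n 1)
    calc |a n| * (|↑n| * |y| ^ (n - 1))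
        ≤ (1 / n !) * (2 ^ n * R ^ n) := by
          apply mul_le_mul (ha n) ?_ (by positivity) (by positivity)
          have : |(n:ℝ)| = (n:ℝ) := abs_of_nonneg (by positivity)
          rw [this]
          exact mul_le_mul hn2 hyn (by positivity) (by positivity)
      _ = (2 * R) ^ n / n ! := by rw [mul_pow]; ring
  have key := hasDerivAt_tsum_of_isPreconnected
    (Real.summable_pow_div_factorial (2 * R)) Metric.isOpen_ball
    (convex_ball (0:ℝ) R).isPreconnected
    (g := fun n x => a n * x ^ n) (g' := fun n x => a n * ((n : ℝ) * x ^ (n - 1)))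
    (fun n y _ => (hasDerivAt_pow n y).const_mul (a n))
    hbound (Metric.mem_ball_self hR0) (summable_series a ha 0)
    (by simpa [Real.norm_eq_abs, hR] using (lt_add_one |u|) : u ∈ Metric.ball (0:ℝ) R)
  have hsum' : Summable (fun n : ℕ => a n * ((n : ℝ) * u ^ (n - 1))) := by
    apply Summable.of_norm_bounded (Real.summable_pow_div_factorial (2 * R))
    intro n
    exact hbound n u (by simpa [Real.norm_eq_abs, hR] using (lt_add_one |u|))
  have hshift : ∑' n : ℕ, a n * ((n : ℝ) * u ^ (n - 1))
      = ∑' n : ℕ, ((n : ℝ) + 1) * a (n + 1) * u ^ n := by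
    rw [Summable.tsum_eq_zero_add hsum']
    simp only [Nat.cast_zero, zero_mul, mul_zero, zero_add, Nat.add_sub_cancel]
    apply tsum_congr
    intro n
    push_cast
    ring
  rwa [hshift] at key

/-- coefficients -/
noncomputable def A (k n : ℕ) : ℝ := 1 / (n ! * (n + k)!)

lemma A_bound (k : ℕ) : ∀ n, |A k n| ≤ 1 / n ! := by
  intro n
  have h1 : (0:ℝ) < n ! := by positivity
  have h2 : (1:ℝ) ≤ ((n + k)! : ℝ) := by exact_mod_cast (n + k).factorial_pos
  rw [A, abs_of_nonneg (by positivity)]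
  rw [div_le_div_iff₀ (by positivity) h1]
  nlinarith

noncomputable def Sg (u : ℝ) : ℝ := ∑' n : ℕ, A 1 n * u ^ n
noncomputable def Sg1 (u : ℝ) : ℝ := ∑' n : ℕ, A 2 n * u ^ n
noncomputable def Sg2 (u : ℝ) : ℝ := ∑' n : ℕ, A 3 n * u ^ n

lemma coeff_step (k n : ℕ) : ((n : ℝ) + 1) * A k (n + 1) = A (k + 1) n := by
  have h1 : ((n)! : ℝ) ≠ 0 := by positivity
  have h2 : ((n + 1 + k)! : ℝ) ≠ 0 := by positivity
  have e1 : ((n + 1)! : ℝ) = ((n : ℝ) + 1) * n ! := by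
    rw [Nat.factorial_succ]; push_cast; ring
  have e2 : (n + 1 + k) = (n + (k + 1)) := by omega
  rw [A, A, e1, e2]
  field_simp

lemma hasDerivAt_Sg (u : ℝ) : HasDerivAt Sg (Sg1 u) u := by
  have h := hasDerivAt_series (A 1) (A_bound 1) u
  have : ∑' n : ℕ, ((n : ℝ) + 1) * A 1 (n + 1) * u ^ n = Sg1 u := by
    rw [Sg1]; exact tsum_congr fun n => by rw [coeff_step]
  rw [this] at h
  exact h

lemma hasDerivAt_Sg1 (u : ℝ) : HasDerivAt Sg1 (Sg2 u) u := by
  have h := hasDerivAt_series (A 2) (A_bound 2) u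
  have : ∑' n : ℕ, ((n : ℝ) + 1) * A 2 (n + 1) * u ^ n = Sg2 u := by
    rw [Sg2]; exact tsum_congr fun n => by rw [coeff_step]
  rw [this] at h
  exact h

/-- the ODE : S - 2 S' - u S'' = 0 -/
lemma ode (u : ℝ) : Sg u - 2 * Sg1 u - u * Sg2 u = 0 := by
  have hs0 := summable_series (A 1) (A_bound 1) u
  have hs1 := summable_series (A 2) (A_bound 2) u
  have hs2 := summable_series (A 3) (A_bound 3) u
  have h1 : Sg u - 2 * Sg1 u = ∑' n : ℕ, (A 1 n - 2 * A 2 n) * u ^ n := by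
    rw [Sg, Sg1, ← tsum_mul_left, ← Summable.tsum_sub hs0 (hs1.mul_left 2)]
    exact tsum_congr fun n => by ring
  have h2 : u * Sg2 u = ∑' n : ℕ, A 3 n * u ^ (n + 1) := by
    rw [Sg2, ← tsum_mul_left]
    exact tsum_congr fun n => by rw [pow_succ]; ring
  have h3 : ∑' n : ℕ, (A 1 n - 2 * A 2 n) * u ^ n = ∑' n : ℕ, A 3 n * u ^ (n + 1) := by
    have hsum : Summable (fun n : ℕ => (A 1 n - 2 * A 2 n) * u ^ n) := by
      have := hs0.sub (hs1.mul_left 2)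
      refine this.congr fun n => ?_
      ring
    rw [Summable.tsum_eq_zero_add hsum]
    have hz : (A 1 0 - 2 * A 2 0) * u ^ 0 = 0 := by
      norm_num [A, Nat.factorial]
    rw [hz, zero_add]
    apply tsum_congr
    intro n
    congr 1
    have e1 : A 1 (n + 1) - 2 * A 2 (n + 1) = A 3 n := by
      have h1 : ((n)! : ℝ) ≠ 0 := by positivity
      have e2 : ((n + 1)! : ℝ) = ((n : ℝ) + 1) * n ! := by
        rw [Nat.factorial_succ]; push_cast; ring
      have e3 : (n + 1 + 1) = n + 2 := by omega
      have e4 : (n + 1 + 2) = n + 3 := by omega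
      have e5 : ((n + 2)! : ℝ) = ((n : ℝ) + 2) * (n+1)! := by
        rw [show n + 2 = (n+1) + 1 by omega, Nat.factorial_succ]; push_cast; ring
      have e6 : ((n + 3)! : ℝ) = ((n : ℝ) + 3) * (n+2)! := by
        rw [show n + 3 = (n+2) + 1 by omega, Nat.factorial_succ]; push_cast; ring
      have hp1 : ((n+1)! : ℝ) ≠ 0 := by positivity
      have hp2 : ((n+2)! : ℝ) ≠ 0 := by positivity
      simp only [A, e3, e4]
      rw [e6, e5, e2]
      field_simp
      ring
    rw [e1]
  rw [h1, h2, h3]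
  ring

lemma Sg_zero : Sg 0 = 1 := by
  rw [Sg, tsum_eq_single 0 (fun n hn => by simp [zero_pow hn])]
  norm_num [A, Nat.factorial]


lemma Kker_eq (c x y : ℝ) : Kker c x y = -(c / 2) * x * Sg (c * (x ^ 2 - y ^ 2) / 4) := by
  rw [Kker, Sg]
  congr 1
  exact tsum_congr fun n => by rw [A]; ring

noncomputable def vv (c x y : ℝ) : ℝ := c * (x ^ 2 - y ^ 2) / 4
noncomputable def KX (c x y : ℝ) : ℝ :=
  -(c / 2) * Sg (vv c x y) - c ^ 2 / 4 * x ^ 2 * Sg1 (vv c x y)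
noncomputable def KY (c x y : ℝ) : ℝ := c ^ 2 / 4 * x * y * Sg1 (vv c x y)

lemma hasDerivAt_vx (c y x : ℝ) :
    HasDerivAt (fun x' => vv c x' y) (c * x / 2) x := by
  have h : HasDerivAt (fun x' : ℝ => c * (x' ^ 2 - y ^ 2) / 4)
      (c * (2 * x ^ 1) / 4) x :=
    (((hasDerivAt_pow 2 x).sub_const (y ^ 2)).const_mul c).div_const 4
  convert h using 1
  · rfl
  ring

lemma hasDerivAt_vy (c x y : ℝ) :
    HasDerivAt (fun y' => vv c x y') (-(c * y / 2)) y := by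
  have h : HasDerivAt (fun y' : ℝ => c * (x ^ 2 - y' ^ 2) / 4)
      (c * (0 - 2 * y ^ 1) / 4) y :=
    (((hasDerivAt_const y (x ^ 2)).sub (hasDerivAt_pow 2 y)).const_mul c).div_const 4
  convert h using 1
  · rfl
  ring

lemma hKx (c x y : ℝ) : HasDerivAt (fun x' => Kker c x' y) (KX c x y) x := by
  have hfun : (fun x' => Kker c x' y) = fun x' => -(c / 2) * x' * Sg (vv c x' y) :=
    funext fun x' => Kker_eq c x' y
  rw [hfun]
  have h : HasDerivAt (fun x' : ℝ => -(c / 2) * x' * Sg (vv c x' y))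
      (-(c / 2) * Sg (vv c x y) + -(c / 2) * x * (Sg1 (vv c x y) * (c * x / 2))) x := by
    have h1 : HasDerivAt (fun x' : ℝ => -(c / 2) * x') (-(c / 2)) x := by
      simpa using (hasDerivAt_id x).const_mul (-(c / 2))
    have h2 : HasDerivAt (fun x' : ℝ => Sg (vv c x' y))
        (Sg1 (vv c x y) * (c * x / 2)) x :=
      by have := (hasDerivAt_Sg (vv c x y)).comp x (hasDerivAt_vx c y x); exact this
    exact h1.mul h2
  convert h using 1
  rw [KX]; ring

lemma hKy (c x y : ℝ) : HasDerivAt (fun y' => Kker c x y') (KY c x y) y := by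
  have hfun : (fun y' => Kker c x y') = fun y' => -(c / 2) * x * Sg (vv c x y') :=
    funext fun y' => Kker_eq c x y'
  rw [hfun]
  have h : HasDerivAt (fun y' : ℝ => -(c / 2) * x * Sg (vv c x y'))
      (Sg1 (vv c x y) * -(c * y / 2) * (-(c / 2) * x)) y :=
    (((hasDerivAt_Sg (vv c x y)).comp y (hasDerivAt_vy c x y)).const_mul (-(c / 2) * x)).congr_deriv
      (by ring)
  convert h using 1
  rw [KY]; ring

lemma hKxx (c x y : ℝ) : HasDerivAt (fun x' => KX c x' y)
    (-(3 * c ^ 2 * x / 4) * Sg1 (vv c x y) - c ^ 3 * x ^ 3 / 8 * Sg2 (vv c x y)) x := by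
  have h1 : HasDerivAt (fun x' : ℝ => -(c / 2) * Sg (vv c x' y))
      (-(c / 2) * (Sg1 (vv c x y) * (c * x / 2))) x :=
    (((hasDerivAt_Sg (vv c x y)).comp x (hasDerivAt_vx c y x)).const_mul (-(c / 2)))
  have h2 : HasDerivAt (fun x' : ℝ => c ^ 2 / 4 * x' ^ 2 * Sg1 (vv c x' y))
      (c ^ 2 / 4 * (2 * x ^ 1) * Sg1 (vv c x y)
        + c ^ 2 / 4 * x ^ 2 * (Sg2 (vv c x y) * (c * x / 2))) x := by
    have ha : HasDerivAt (fun x' : ℝ => c ^ 2 / 4 * x' ^ 2) (c ^ 2 / 4 * (2 * x ^ 1)) x :=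
      (hasDerivAt_pow 2 x).const_mul (c ^ 2 / 4)
    have hb : HasDerivAt (fun x' : ℝ => Sg1 (vv c x' y)) (Sg2 (vv c x y) * (c * x / 2)) x :=
      by have := (hasDerivAt_Sg1 (vv c x y)).comp x (hasDerivAt_vx c y x); exact this
    exact ha.mul hb
  have h := h1.sub h2
  exact h.congr_deriv (by ring)

lemma hKyy (c x y : ℝ) : HasDerivAt (fun y' => KY c x y')
    (c ^ 2 * x / 4 * Sg1 (vv c x y) - c ^ 3 * x * y ^ 2 / 8 * Sg2 (vv c x y)) y := by
  have ha : HasDerivAt (fun y' : ℝ => c ^ 2 / 4 * x * y') (c ^ 2 / 4 * x) y := by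
    simpa using (hasDerivAt_id y).const_mul (c ^ 2 / 4 * x)
  have hb : HasDerivAt (fun y' : ℝ => Sg1 (vv c x y')) (Sg2 (vv c x y) * -(c * y / 2)) y :=
    (hasDerivAt_Sg1 (vv c x y)).comp y (hasDerivAt_vy c x y)
  have h := ha.mul hb
  have hfun : (fun y' : ℝ => KY c x y') = fun y' => c ^ 2 / 4 * x * y' * Sg1 (vv c x y') := by
    funext y'; rw [KY]
  rw [hfun]
  exact h.congr_deriv (by ring)

end KkerAux

open KkerAux in
/-- the kernel `K_c` solves the backstepping kernel equation
`k_yy − k_xx + c·k = 0` with `k_y(x,0) = 0` and `k(x,x) = −cx/2`. -/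
theorem Kker_solves_kernel_equation (c : ℝ) (hc : c > 0) :
    (∀ x y : ℝ,
      pdy (pdy (Kker c)) x y - pdx (pdx (Kker c)) x y + c * Kker c x y = 0) ∧
    (∀ x : ℝ, pdy (Kker c) x 0 = 0) ∧
    (∀ x : ℝ, Kker c x x = -(c / 2) * x) := by
  have hpdx : ∀ x y : ℝ, pdx (Kker c) x y = KX c x y := fun x y => (hKx c x y).deriv
  have hpdy : ∀ x y : ℝ, pdy (Kker c) x y = KY c x y := fun x y => (hKy c x y).deriv
  refine ⟨fun x y => ?_, fun x => ?_, fun x => ?_⟩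
  · have e1 : pdx (pdx (Kker c)) x y
        = -(3 * c ^ 2 * x / 4) * Sg1 (vv c x y) - c ^ 3 * x ^ 3 / 8 * Sg2 (vv c x y) := by
      have : (fun x' => pdx (Kker c) x' y) = fun x' => KX c x' y :=
        funext fun x' => hpdx x' y
      rw [pdx, this]
      exact (hKxx c x y).deriv
    have e2 : pdy (pdy (Kker c)) x y
        = c ^ 2 * x / 4 * Sg1 (vv c x y) - c ^ 3 * x * y ^ 2 / 8 * Sg2 (vv c x y) := by
      have : (fun y' => pdy (Kker c) x y') = fun y' => KY c x y' :=
        funext fun y' => hpdy x y'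
      rw [pdy, this]
      exact (hKyy c x y).deriv
    simp only [vv] at e1 e2
    rw [e1, e2, Kker_eq]
    have hode := ode (c * (x ^ 2 - y ^ 2) / 4)
    linear_combination (-(c ^ 2 * x / 2)) * hode
  · rw [hpdy, KY]; ring
  · rw [Kker_eq]
    have : vv c x x = 0 := by rw [vv]; ring
    rw [show c * (x ^ 2 - x ^ 2) / 4 = 0 by ring, Sg_zero, mul_one]
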